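/- Let A be an n-by-n symmetric real matrix with 0 ⪯ A ⪯ I, let p ∈ [0,1], set B = (1−p)·I + p·A, and let k ≥ 0 be a natural number. Then Aᵏ⁺¹ ⪯ (1/2)·(I + B²); that is, (1/2)·(I + B²) − Aᵏ⁺¹ is positive semidefinite. -/

import Mathlib

open Matrix

lemma psd_smul {n : ℕ} {M : Matrix (Fin n) (Fin n) ℝ} (h : M.PosSemidef) {c : ℝ}
    (hc : 0 ≤ c) : (c • M).PosSemidef := by
  refine .of_dotProduct_mulVec_nonneg (by unfold Matrix.IsHermitian; rw [conjTranspose_smul, h.1.eq, star_trivial]) fun x => ?_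
  rw [smul_mulVec, dotProduct_smul]
  exact mul_nonneg hc (h.dotProduct_mulVec_nonneg x)

open scoped MatrixOrder in
lemma one_sub_pow_psd {n : ℕ} {A : Matrix (Fin n) (Fin n) ℝ} (hA0 : A.PosSemidef)
    (hAI : ((1 : Matrix (Fin n) (Fin n) ℝ) - A).PosSemidef) (m : ℕ) :
    ((1 : Matrix (Fin n) (Fin n) ℝ) - A ^ m).PosSemidef := by
  induction m with
  | zero => simpa using Matrix.PosSemidef.zero
  | succ m ih =>
    have hS : CFC.sqrt A * CFC.sqrt A = A := CFC.sqrt_mul_sqrt_self A hA0.nonneg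
    have hSh : (CFC.sqrt A)ᴴ = CFC.sqrt A := (CFC.sqrt_nonneg A).posSemidef.1
    have key : (CFC.sqrt A * (1 - A ^ m) * (CFC.sqrt A)ᴴ).PosSemidef :=
      ih.mul_mul_conjTranspose_same _
    have hcomm : CFC.sqrt A * A ^ m = A ^ m * CFC.sqrt A := by
      have : A ^ m = CFC.sqrt A ^ (2 * m) := by
        rw [pow_mul, sq, hS]
      rw [this]; exact (Commute.self_pow _ _)
    have heq : CFC.sqrt A * (1 - A ^ m) * (CFC.sqrt A)ᴴ = A - A ^ (m + 1) := by
      rw [hSh, mul_sub, sub_mul, mul_one, hS, mul_assoc, ← hcomm, ← mul_assoc, hS,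
        ← pow_succ']
    rw [heq] at key
    have := hAI.add key
    simpa [sub_add_sub_cancel] using this

open scoped MatrixOrder in
lemma sub_pow_psd {n : ℕ} {A : Matrix (Fin n) (Fin n) ℝ} (hA0 : A.PosSemidef)
    (hAI : ((1 : Matrix (Fin n) (Fin n) ℝ) - A).PosSemidef) (m : ℕ) :
    (A - A ^ (m + 1)).PosSemidef := by
  have hS : CFC.sqrt A * CFC.sqrt A = A := CFC.sqrt_mul_sqrt_self A hA0.nonneg
  have hSh : (CFC.sqrt A)ᴴ = CFC.sqrt A := (CFC.sqrt_nonneg A).posSemidef.1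
  have key : (CFC.sqrt A * (1 - A ^ m) * (CFC.sqrt A)ᴴ).PosSemidef :=
    (one_sub_pow_psd hA0 hAI m).mul_mul_conjTranspose_same _
  have hcomm : CFC.sqrt A * A ^ m = A ^ m * CFC.sqrt A := by
    have : A ^ m = CFC.sqrt A ^ (2 * m) := by rw [pow_mul, sq, hS]
    rw [this]; exact (Commute.self_pow _ _)
  have heq : CFC.sqrt A * (1 - A ^ m) * (CFC.sqrt A)ᴴ = A - A ^ (m + 1) := by
    rw [hSh, mul_sub, sub_mul, mul_one, hS, mul_assoc, ← hcomm, ← mul_assoc, hS,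
      ← pow_succ']
  rwa [heq] at key

theorem stmt_15 (n : ℕ) (A : Matrix (Fin n) (Fin n) ℝ)
    (hA : A.IsHermitian) (hA0 : A.PosSemidef)
    (hAI : ((1 : Matrix (Fin n) (Fin n) ℝ) - A).PosSemidef)
    (p : ℝ) (hp0 : 0 ≤ p) (hp1 : p ≤ 1) (k : ℕ) :
    let B : Matrix (Fin n) (Fin n) ℝ := (1 - p) • (1 : Matrix (Fin n) (Fin n) ℝ) + p • A
    ((1 / 2 : ℝ) • ((1 : Matrix (Fin n) (Fin n) ℝ) + B ^ 2) - A ^ (k + 1)).PosSemidef := by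
  intro B
  have hBh : ((1 : Matrix (Fin n) (Fin n) ℝ) - B)ᴴ = 1 - B := by
    have hAt : Aᵀ = A := by simpa using hA.eq
    simp [B, conjTranspose_add, conjTranspose_smul, hAt]
  have hPSD1 : (((1 : Matrix (Fin n) (Fin n) ℝ) - B) * (1 - B)).PosSemidef := by
    have := posSemidef_conjTranspose_mul_self ((1 : Matrix (Fin n) (Fin n) ℝ) - B)
    rwa [hBh] at this
  have h2 : ((1 : Matrix (Fin n) (Fin n) ℝ) - B) * (1 - B) = 1 - B - B + B ^ 2 := by
    noncomm_ring
  have hid : (1 / 2 : ℝ) • ((1 : Matrix (Fin n) (Fin n) ℝ) + B ^ 2) - A ^ (k + 1)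
      = (1 / 2 : ℝ) • (((1 : Matrix (Fin n) (Fin n) ℝ) - B) * (1 - B))
        + ((1 - p) • ((1 : Matrix (Fin n) (Fin n) ℝ) - A ^ (k + 1))
          + p • (A - A ^ (k + 1))) := by
    rw [h2]
    simp only [B, smul_add, smul_sub]
    module
  rw [hid]
  exact (psd_smul hPSD1 (by norm_num)).add
    ((psd_smul (one_sub_pow_psd hA0 hAI (k + 1)) (by linarith)).add
      (psd_smul (sub_pow_psd hA0 hAI k) hp0))
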